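/- For every N ≥ 2, every KC-PMI P on N parties, and every subsystem Y with β(Y) positive and non-essential, there exists a finite sequence (X_1, X_2, …, X_r) of subsystems with r ≥ 2 such that each β(X_i) is essential, Y = X_1 ∪ ⋯ ∪ X_r, and for every i ∈ {2,…,r}, X_i ∩ (X_1 ∪ ⋯ ∪ X_{i−1}) ≠ ∅. -/
import Mathlib


namespace HEC

/-- The parties `⟦N⟧ = {0,1,…,N}`, where `0` is the purifier. -/
abbrev Party (N : ℕ) := Fin (N + 1)

/-- A collection of parties. -/
abbrev PSet (N : ℕ) := Finset (Party N)

/-- MI instances: unordered pairs of subsets of parties. -/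
abbrev MI (N : ℕ) := Sym2 (PSet N)

/-- `m` is an MI instance, i.e. an unordered pair of disjoint nonempty subsets of `⟦N⟧`. -/
def IsMIInst {N : ℕ} (m : MI N) : Prop :=
  ∃ Y Z : PSet N, m = s(Y, Z) ∧ Y.Nonempty ∧ Z.Nonempty ∧ Disjoint Y Z

/-- The MI-poset order: `{Y,Z} ⪯ {Y',Z'}` iff (`Y ⊆ Y'` and `Z ⊆ Z'`) or
(`Y ⊆ Z'` and `Z ⊆ Y'`).  (The two cases are absorbed by the existential over
representatives of the unordered pairs.) -/
def MIle {N : ℕ} (m m' : MI N) : Prop :=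
  ∃ Y Z Y' Z' : PSet N, m = s(Y, Z) ∧ m' = s(Y', Z') ∧ Y ⊆ Y' ∧ Z ⊆ Z'

/-- An `N`-party entropy vector, extended to all subsets of `⟦N⟧` by the purification
convention: `S ∅ = 0` and `S Y = S (⟦N⟧ \ Y)` whenever `0 ∈ Y`. -/
structure EntropyVec (N : ℕ) where
  S : PSet N → ℝ
  S_empty : S ∅ = 0
  S_purify : ∀ Y : PSet N, (0 : Party N) ∈ Y → S Y = S (Finset.univ \ Y)

/-- Mutual information `I(Y:Z) = S_Y + S_Z - S_{Y∪Z}`. -/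
def EntropyVec.I {N : ℕ} (v : EntropyVec N) (Y Z : PSet N) : ℝ :=
  v.S Y + v.S Z - v.S (Y ∪ Z)

/-- Membership in the subadditivity cone: `I(Y:Z) ≥ 0` for every MI instance. -/
def EntropyVec.InSAC {N : ℕ} (v : EntropyVec N) : Prop :=
  ∀ Y Z : PSet N, Y.Nonempty → Z.Nonempty → Disjoint Y Z → 0 ≤ v.I Y Z

/-- The pattern of marginal independence of `v`: the MI instances vanishing on `v`. -/
def EntropyVec.PMI {N : ℕ} (v : EntropyVec N) : Set (MI N) :=
  {m | ∃ Y Z : PSet N, m = s(Y, Z) ∧ Y.Nonempty ∧ Z.Nonempty ∧ Disjoint Y Z ∧ v.I Y Z = 0}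

/-- `P` is a down-set in the MI-poset. -/
def IsMIDownSet {N : ℕ} (P : Set (MI N)) : Prop :=
  ∀ m m' : MI N, IsMIInst m → m' ∈ P → MIle m m' → m ∈ P

/-- `P` is a KC-PMI: the PMI of some entropy vector in the subadditivity cone,
which moreover is a down-set in the MI-poset. -/
def IsKCPMI {N : ℕ} (P : Set (MI N)) : Prop :=
  (∃ v : EntropyVec N, v.InSAC ∧ P = v.PMI) ∧ IsMIDownSet P

/-- The β-set of `X`: all MI instances `{Y,Z}` with `Y ∪ Z = X`. -/
def betaSet {N : ℕ} (X : PSet N) : Set (MI N) :=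
  {m | ∃ Y Z : PSet N, m = s(Y, Z) ∧ Y.Nonempty ∧ Z.Nonempty ∧ Disjoint Y Z ∧ Y ∪ Z = X}

/-- The antichain `A` of minimal elements of `P̄ = M_N ∖ P`. -/
def minimalMI {N : ℕ} (P : Set (MI N)) : Set (MI N) :=
  {m | IsMIInst m ∧ m ∉ P ∧ ∀ m' : MI N, IsMIInst m' → m' ∉ P → MIle m' m → m' = m}

/-- `β(X)` is positive: `β(X) ⊆ P̄`. -/
def BPos {N : ℕ} (P : Set (MI N)) (X : PSet N) : Prop :=
  ∀ m ∈ betaSet X, m ∉ P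

/-- `β(X)` is vanishing: `β(X) ⊆ P`. -/
def BVan {N : ℕ} (P : Set (MI N)) (X : PSet N) : Prop :=
  betaSet X ⊆ P

/-- `β(X)` is partial: it has elements both in `P` and in `P̄`. -/
def BPart {N : ℕ} (P : Set (MI N)) (X : PSet N) : Prop :=
  (∃ m ∈ betaSet X, m ∈ P) ∧ (∃ m ∈ betaSet X, m ∉ P)

/-- `β(X)` is essential: `β(X) ∩ A ≠ ∅`. -/
def BEss {N : ℕ} (P : Set (MI N)) (X : PSet N) : Prop :=
  ∃ m ∈ betaSet X, m ∈ minimalMI P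

/-- `β(X)` is completely essential: `β(X) ⊆ A`. -/
def BCEss {N : ℕ} (P : Set (MI N)) (X : PSet N) : Prop :=
  betaSet X ⊆ minimalMI P

/-- `β(X)` is non-essential: `β(X) ∩ A = ∅`. -/
def BNEss {N : ℕ} (P : Set (MI N)) (X : PSet N) : Prop :=
  ∀ m ∈ betaSet X, m ∉ minimalMI P

/-- `pos_<(Y)`: the proper subsystems `Z ⊊ Y` with `|Z| ≥ 2` and `β(Z)` positive. -/
def posBelow {N : ℕ} (P : Set (MI N)) (Y : PSet N) : Set (PSet N) :=
  {Z | Z ⊂ Y ∧ 2 ≤ Z.card ∧ BPos P Z}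

/-- `Max(pos_<(Y))`: the inclusion-maximal elements of `pos_<(Y)`. -/
def maxPosBelow {N : ℕ} (P : Set (MI N)) (Y : PSet N) : Set (PSet N) :=
  {Z | Z ∈ posBelow P Y ∧ ∀ Z' ∈ posBelow P Y, Z ⊆ Z' → Z = Z'}

/-- The MI instance `m = {Y,Z}` splits `X` if `X ∩ Y ≠ ∅` and `X ∩ Z ≠ ∅`. -/
def Splits {N : ℕ} (m : MI N) (X : PSet N) : Prop :=
  ∃ Y Z : PSet N, m = s(Y, Z) ∧ (X ∩ Y).Nonempty ∧ (X ∩ Z).Nonempty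

/-- The hyperedges of the correlation hypergraph `H_P`: one hyperedge `e_X` for each
`X ⊆ ⟦N⟧` (with `|X| ≥ 2`) whose β-set is positive.  Vertices `v_ℓ` are identified
with the parties `ℓ ∈ ⟦N⟧`, and hyperedges with the corresponding subsystems. -/
def Hedge {N : ℕ} (P : Set (MI N)) : Set (PSet N) :=
  {X | 2 ≤ X.card ∧ BPos P X}

/-- The hyperedges of the sub-hypergraph `H_Y`: the hyperedges `e_Z` with `Z ⊊ Y`. -/
def subEdges {N : ℕ} (P : Set (MI N)) (Y : PSet N) : Set (PSet N) :=
  {Z | Z ⊂ Y ∧ Z ∈ Hedge P}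

/-- One step in a hypergraph with hyperedge set `E`: `a` and `b` lie in a common
hyperedge. -/
def hStep {N : ℕ} (E : Set (PSet N)) (a b : Party N) : Prop :=
  ∃ e ∈ E, a ∈ e ∧ b ∈ e

/-- Connectivity of the hypergraph with vertex set `V` and hyperedge set `E`:
every two vertices are joined by a path (a one-vertex hypergraph is connected). -/
def hConn {N : ℕ} (V : PSet N) (E : Set (PSet N)) : Prop :=
  ∀ a ∈ V, ∀ b ∈ V, Relation.ReflTransGen (hStep E) a b

/-- The vertex set of the connected component of `a` in the hypergraph with
vertex set `V` and hyperedge set `E`. -/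
def hComp {N : ℕ} (V : PSet N) (E : Set (PSet N)) (a : Party N) : Set (Party N) :=
  {b | b ∈ V ∧ Relation.ReflTransGen (hStep E) a b}

/-- A clique of the line graph `L_{H_P}`: a set of hyperedges of `H_P` which are
pairwise adjacent (distinct hyperedges being adjacent iff they intersect). -/
def IsLineClique {N : ℕ} (P : Set (MI N)) (Q : Set (PSet N)) : Prop :=
  Q ⊆ Hedge P ∧ ∀ e ∈ Q, ∀ f ∈ Q, e ≠ f → (e ∩ f).Nonempty

/-- A max-clique of the line graph `L_{H_P}`: a (nonempty) clique which is maximal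
under inclusion. -/
def IsMaxClique {N : ℕ} (P : Set (MI N)) (Q : Set (PSet N)) : Prop :=
  Q.Nonempty ∧ IsLineClique P Q ∧ ∀ Q' : Set (PSet N), IsLineClique P Q' → Q ⊆ Q' → Q = Q'

/-- `Q^∩`: the intersection of the hyperedges in `Q`, viewed as sets of vertices. -/
def qInter {N : ℕ} (Q : Set (PSet N)) : Set (Party N) :=
  {ℓ | ∀ e ∈ Q, ℓ ∈ e}


private def μ {N : ℕ} (m : MI N) : ℕ :=
  Sym2.lift ⟨fun a b => a.card + b.card, fun a b => by ring⟩ m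

private lemma μ_mk {N : ℕ} (a b : PSet N) : μ (s(a,b)) = a.card + b.card := rfl

private lemma MIle_refl {N : ℕ} (m : MI N) : MIle m m := by
  induction m using Sym2.inductionOn with
  | hf a b => exact ⟨a, b, a, b, rfl, rfl, subset_rfl, subset_rfl⟩

private lemma MIle_trans {N : ℕ} {a b c : MI N} (h1 : MIle a b) (h2 : MIle b c) :
    MIle a c := by
  obtain ⟨A, B, C, D, ha, hb, hAC, hBD⟩ := h1
  obtain ⟨C', D', E, F, hb', hc, hCE, hDF⟩ := h2
  rw [hb, Sym2.eq_iff] at hb'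
  rcases hb' with ⟨hC, hD⟩ | ⟨hC, hD⟩
  · exact ⟨A, B, E, F, ha, hc, (hC ▸ hAC).trans hCE, (hD ▸ hBD).trans hDF⟩
  · exact ⟨B, A, E, F, by rw [ha, Sym2.eq_swap], hc,
      (hD ▸ hBD).trans hCE, (hC ▸ hAC).trans hDF⟩

private lemma descend {N : ℕ} (P : Set (MI N)) (m : MI N) (hi : IsMIInst m)
    (hm : m ∉ P) : ∃ m', m' ∈ minimalMI P ∧ MIle m' m := by
  generalize hn : μ m = n
  induction n using Nat.strong_induction_on generalizing m with
  | _ n ih =>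
    by_cases h : m ∈ minimalMI P
    · exact ⟨m, h, MIle_refl m⟩
    · have h' : ¬ ∀ m' : MI N, IsMIInst m' → m' ∉ P → MIle m' m → m' = m := by
        intro hall; exact h ⟨hi, hm, hall⟩
      push_neg at h'
      obtain ⟨m', hinst', hnot', hle', hne'⟩ := h'
      obtain ⟨A, B, C, D, hm'eq, hmeq, hAC, hBD⟩ := hle'
      have hμ : μ m' < n := by
        subst hn
        rw [hm'eq, hmeq, μ_mk, μ_mk]
        by_cases hA : A = C
        · have hB : B ≠ D := by
            intro hB; exact hne' (by rw [hm'eq, hmeq, hA, hB])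
          have : B.card < D.card := Finset.card_lt_card (ssubset_of_ne_of_subset hB hBD)
          have hcc : A.card = C.card := by rw [hA]
          omega
        · have : A.card < C.card := Finset.card_lt_card (ssubset_of_ne_of_subset hA hAC)
          have := Finset.card_le_card hBD
          omega
      obtain ⟨m'', h1, h2⟩ := ih (μ m') hμ m' hinst' hnot' rfl
      exact ⟨m'', h1, MIle_trans h2 ⟨A, B, C, D, hm'eq, hmeq, hAC, hBD⟩⟩

/-- For any bipartition `{A,B}` of a positive `Y`, there is an essential edge
inside `Y` meeting both blocks. -/
private lemma exists_ess_split {N : ℕ} (P : Set (MI N)) (Y : PSet N) (hpos : BPos P Y)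
    {A B : PSet N} (hA : A.Nonempty) (hB : B.Nonempty) (hd : Disjoint A B)
    (hu : A ∪ B = Y) :
    ∃ X : PSet N, BEss P X ∧ X ⊆ Y ∧ (X ∩ A).Nonempty ∧ (X ∩ B).Nonempty := by
  have hmβ : s(A, B) ∈ betaSet Y := ⟨A, B, rfl, hA, hB, hd, hu⟩
  have hmP := hpos _ hmβ
  have hinst : IsMIInst (s(A, B)) := ⟨A, B, rfl, hA, hB, hd⟩
  obtain ⟨m', hmin, hle⟩ := descend P _ hinst hmP
  obtain ⟨A', B', C, D, heq', heq, hsub1, hsub2⟩ := hle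
  rw [Sym2.eq_iff] at heq
  obtain ⟨A₀, B₀, heq₀, hA₀, hB₀, hd₀⟩ := hmin.1
  rw [heq', Sym2.eq_iff] at heq₀
  have hprops : A'.Nonempty ∧ B'.Nonempty ∧ Disjoint A' B' := by
    rcases heq₀ with ⟨h1, h2⟩ | ⟨h1, h2⟩
    · subst h1; subst h2; exact ⟨hA₀, hB₀, hd₀⟩
    · subst h1; subst h2; exact ⟨hB₀, hA₀, hd₀.symm⟩
  have hAY : A ⊆ Y := by rw [← hu]; exact Finset.subset_union_left
  have hBY : B ⊆ Y := by rw [← hu]; exact Finset.subset_union_right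
  have hβ : m' ∈ betaSet (A' ∪ B') :=
    ⟨A', B', heq', hprops.1, hprops.2.1, hprops.2.2, rfl⟩
  rcases heq with ⟨hC, hD⟩ | ⟨hC, hD⟩
  · subst hC; subst hD
    exact ⟨A' ∪ B', ⟨m', hβ, hmin⟩,
      Finset.union_subset (hsub1.trans hAY) (hsub2.trans hBY),
      hprops.1.mono (Finset.subset_inter Finset.subset_union_left hsub1),
      hprops.2.1.mono (Finset.subset_inter Finset.subset_union_right hsub2)⟩
  · subst hC; subst hD
    exact ⟨A' ∪ B', ⟨m', hβ, hmin⟩,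
      Finset.union_subset (hsub1.trans hBY) (hsub2.trans hAY),
      hprops.2.1.mono (Finset.subset_inter Finset.subset_union_right hsub2),
      hprops.1.mono (Finset.subset_inter Finset.subset_union_left hsub1)⟩

/-- Greedy construction of a chained cover of `Y` by essential edges. -/
private lemma greedy {N : ℕ} (P : Set (MI N)) (Y : PSet N)
    (hsplit : ∀ A B : PSet N, A.Nonempty → B.Nonempty → Disjoint A B → A ∪ B = Y →
      ∃ X, BEss P X ∧ X ⊆ Y ∧ (X ∩ A).Nonempty ∧ (X ∩ B).Nonempty) :
    ∀ (n r : ℕ) (f : ℕ → PSet N), 1 ≤ r →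
      (∀ i < r, BEss P (f i) ∧ f i ⊆ Y) →
      (∀ i < r, 0 < i → ((f i) ∩ (Finset.range i).biUnion f).Nonempty) →
      ((Finset.range r).biUnion f).Nonempty →
      (Y \ (Finset.range r).biUnion f).card ≤ n →
      ∃ (r' : ℕ) (f' : ℕ → PSet N), 1 ≤ r' ∧
        (∀ i < r', BEss P (f' i) ∧ f' i ⊆ Y) ∧
        (∀ i < r', 0 < i → ((f' i) ∩ (Finset.range i).biUnion f').Nonempty) ∧
        (Finset.range r').biUnion f' = Y := by
  intro n
  induction n with
  | zero =>
    intro r f hr h1 h2 hne hcard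
    have hUY : (Finset.range r).biUnion f ⊆ Y := by
      intro a ha
      obtain ⟨i, hi, hai⟩ := Finset.mem_biUnion.1 ha
      exact (h1 i (Finset.mem_range.1 hi)).2 hai
    have : Y \ (Finset.range r).biUnion f = ∅ := Finset.card_eq_zero.1 (Nat.le_zero.1 hcard)
    have hYU : Y ⊆ (Finset.range r).biUnion f := by
      intro a ha
      by_contra hna
      exact (Finset.notMem_empty a) (this ▸ Finset.mem_sdiff.2 ⟨ha, hna⟩)
    exact ⟨r, f, hr, h1, h2, Finset.Subset.antisymm hUY hYU⟩
  | succ n ih =>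
    intro r f hr h1 h2 hne hcard
    set U := (Finset.range r).biUnion f with hU
    have hUY : U ⊆ Y := by
      intro a ha
      obtain ⟨i, hi, hai⟩ := Finset.mem_biUnion.1 ha
      exact (h1 i (Finset.mem_range.1 hi)).2 hai
    by_cases hB : (Y \ U).Nonempty
    · obtain ⟨X, hXess, hXY, hXA, hXB⟩ :=
        hsplit U (Y \ U) hne hB Finset.disjoint_sdiff (Finset.union_sdiff_of_subset hUY)
      set f' : ℕ → PSet N := fun i => if i < r then f i else X with hf'
      have hagree : ∀ i < r, f' i = f i := by
        intro i hi; simp only [hf', if_pos hi]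
      have hfr : f' r = X := by simp only [hf', lt_irrefl, if_neg (lt_irrefl r)]
      have hbelow : ∀ j ≤ r, (Finset.range j).biUnion f' = (Finset.range j).biUnion f := by
        intro j hj
        apply Finset.biUnion_congr rfl
        intro i hi
        exact hagree i (lt_of_lt_of_le (Finset.mem_range.1 hi) hj)
      have hUnew : (Finset.range (r + 1)).biUnion f' = U ∪ X := by
        rw [Finset.range_add_one, Finset.biUnion_insert, hfr, hbelow r le_rfl,
          Finset.union_comm]
      apply ih (r + 1) f' (by omega)
      · intro i hi
        rcases Nat.lt_or_ge i r with h | h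
        · rw [hagree i h]; exact h1 i h
        · have : i = r := by omega
          rw [this, hfr]; exact ⟨hXess, hXY⟩
      · intro i hi hi0
        rcases Nat.lt_or_ge i r with h | h
        · rw [hagree i h, hbelow i (le_of_lt h)]; exact h2 i h hi0
        · have hir : i = r := by omega
          rw [hir, hfr, hbelow r le_rfl, ← hU]
          exact hXA
      · rw [hUnew]; exact hne.mono Finset.subset_union_left
      · rw [hUnew]
        obtain ⟨b, hb⟩ := hXB
        have hbX : b ∈ X := (Finset.mem_inter.1 hb).1
        have hbYU : b ∈ Y \ U := (Finset.mem_inter.1 hb).2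
        have hstrict : Y \ (U ∪ X) ⊂ Y \ U := by
          constructor
          · exact Finset.sdiff_subset_sdiff subset_rfl Finset.subset_union_left
          · intro hsub
            have := hsub hbYU
            rw [Finset.mem_sdiff] at this
            exact this.2 (Finset.mem_union_right _ hbX)
        have := Finset.card_lt_card hstrict
        omega
    · have : Y \ U = ∅ := Finset.not_nonempty_iff_eq_empty.1 hB
      have hYU : Y ⊆ U := by
        intro a ha
        by_contra hna
        exact (Finset.notMem_empty a) (this ▸ Finset.mem_sdiff.2 ⟨ha, hna⟩)
      exact ⟨r, f, hr, h1, h2, Finset.Subset.antisymm hUY hYU⟩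

/-- For every KC-PMI `P` and subsystem `Y` with `β(Y)` positive and
non-essential, there is a sequence `(X_1, …, X_r)` of subsystems with `r ≥ 2`, each
`β(X_i)` essential, `Y = X_1 ∪ ⋯ ∪ X_r`, and for every `i ≥ 2`,
`X_i ∩ (X_1 ∪ ⋯ ∪ X_{i−1}) ≠ ∅`. -/
theorem statement11 {N : ℕ} (hN : 2 ≤ N) (P : Set (MI N)) (hP : IsKCPMI P)
    (Y : PSet N) (hY : 2 ≤ Y.card) (hpos : BPos P Y) (hness : BNEss P Y) :
    ∃ (r : ℕ) (X : Fin r → PSet N), 2 ≤ r ∧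
      (∀ i : Fin r, BEss P (X i)) ∧
      Y = (Finset.univ : Finset (Fin r)).biUnion X ∧
      (∀ i : Fin r, 0 < (i : ℕ) →
        ((X i) ∩ ((Finset.univ : Finset (Fin r)).filter
          (fun j : Fin r => (j : ℕ) < (i : ℕ))).biUnion X).Nonempty) := by
  classical
  -- Y is nonempty; pick a vertex and an essential edge through it
  have hYne : Y.Nonempty := Finset.card_pos.1 (by omega)
  obtain ⟨ℓ, hℓ⟩ := hYne
  have hBne : (Y \ {ℓ}).Nonempty := by
    rw [← Finset.card_pos, Finset.card_sdiff_of_subset (Finset.singleton_subset_iff.2 hℓ)]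
    simp only [Finset.card_singleton]
    omega
  have hsplit : ∀ A B : PSet N, A.Nonempty → B.Nonempty → Disjoint A B → A ∪ B = Y →
      ∃ X, BEss P X ∧ X ⊆ Y ∧ (X ∩ A).Nonempty ∧ (X ∩ B).Nonempty :=
    fun A B hA hB hd hu => exists_ess_split P Y hpos hA hB hd hu
  obtain ⟨X₀, hX₀ess, hX₀Y, hX₀A, hX₀B⟩ :=
    hsplit {ℓ} (Y \ {ℓ}) (Finset.singleton_nonempty ℓ) hBne Finset.disjoint_sdiff
      (Finset.union_sdiff_of_subset (Finset.singleton_subset_iff.2 hℓ))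
  -- run the greedy construction starting from (X₀)
  obtain ⟨r, f, hr1, hcond, hchain, hunion⟩ :=
    greedy P Y hsplit ((Y \ (Finset.range 1).biUnion (fun _ => X₀)).card) 1 (fun _ => X₀)
      le_rfl
      (fun i hi => ⟨hX₀ess, hX₀Y⟩)
      (fun i hi hi0 => by omega)
      (by
        rw [Finset.range_one, Finset.singleton_biUnion]
        exact hX₀A.mono Finset.inter_subset_left)
      le_rfl
  -- r ≥ 2 : otherwise Y itself would be essential, contradicting hness
  have hr2 : 2 ≤ r := by
    rcases Nat.lt_or_ge r 2 with h | h
    · exfalso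
      have hr1' : r = 1 := by omega
      subst hr1'
      rw [Finset.range_one, Finset.singleton_biUnion] at hunion
      have hYess : BEss P Y := hunion ▸ (hcond 0 (by omega)).1
      obtain ⟨m, hmβ, hmA⟩ := hYess
      exact hness m hmβ hmA
    · exact h
  refine ⟨r, fun i => f i.val, hr2, ?_, ?_, ?_⟩
  · intro i; exact (hcond i.val i.isLt).1
  · rw [← hunion]
    ext a
    simp only [Finset.mem_biUnion, Finset.mem_range, Finset.mem_univ, true_and]
    constructor
    · rintro ⟨i, hi, ha⟩; exact ⟨⟨i, hi⟩, ha⟩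
    · rintro ⟨i, ha⟩; exact ⟨i.val, i.isLt, ha⟩
  · intro i hi0
    have hkey : ((Finset.univ : Finset (Fin r)).filter
        (fun j : Fin r => (j : ℕ) < (i : ℕ))).biUnion (fun j => f j.val)
        = (Finset.range i.val).biUnion f := by
      ext a
      simp only [Finset.mem_biUnion, Finset.mem_filter, Finset.mem_univ, true_and,
        Finset.mem_range]
      constructor
      · rintro ⟨j, hj, ha⟩; exact ⟨j.val, hj, ha⟩
      · rintro ⟨j, hj, ha⟩; exact ⟨⟨j, lt_trans hj i.isLt⟩, hj, ha⟩
    rw [hkey]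
    exact hchain i.val i.isLt hi0

end HEC
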